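/- arXiv:2406.07991 — 2 statements merged into one kernel-verified Lean document; each statement's English description precedes it below -/
import Mathlib

section
/- (Theorem 2: asymptotic bias of a linear regression trained on an aggregated target.) Let f : Ω → ℝ and ψ : Ω → ℝ be square-integrable mean-zero random variables with Var(ψ) > 0. Then the population least-squares predictor of ψ from φ, evaluated as a predictor of f, satisfies E[ ( ∑_k w(ψ) k * φ k − f )² ] = Var(f) − Var(ψ) * R²(ψ) + 2 * ( pcov(ψ, f − ψ | φ) − cov(ψ, f − ψ) ). -/
open MeasureTheory ProbabilityTheory Matrix

/-- Covariance of two real random variables. -/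
noncomputable def cov {Ω : Type*} [MeasurableSpace Ω] (μ : Measure Ω) (X Y : Ω → ℝ) : ℝ :=
  ∫ ω, (X ω - ∫ x, X x ∂μ) * (Y ω - ∫ x, Y x ∂μ) ∂μ

lemma memLp_two_integrable_mul {Ω : Type*} [MeasurableSpace Ω] {μ : Measure Ω} {f g : Ω → ℝ}
    (hf : MemLp f 2 μ) (hg : MemLp g 2 μ) : Integrable (fun ω => f ω * g ω) μ := by
  have h1 := (hf.add hg).integrable_sq
  have h2 := hf.integrable_sq
  have h3 := hg.integrable_sq
  have h1' : Integrable (fun ω => (f ω + g ω) ^ 2) μ := h1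
  have heq : (fun ω => f ω * g ω)
      = fun ω => ((f ω + g ω) ^ 2 - f ω ^ 2 - g ω ^ 2) / 2 := by
    funext ω; ring
  rw [heq]
  exact ((h1'.sub h2).sub h3).div_const 2

lemma cov_zero_mean {Ω : Type*} [MeasurableSpace Ω] {μ : Measure Ω} {X Y : Ω → ℝ}
    (hX0 : ∫ ω, X ω ∂μ = 0) (hY0 : ∫ ω, Y ω ∂μ = 0) :
    cov μ X Y = ∫ ω, X ω * Y ω ∂μ := by
  simp [cov, hX0, hY0]

/-- Theorem 2 (asymptotic bias of a linear regression trained on an aggregated target):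
the population least-squares predictor of the aggregated target `ψ` from the features `φ`,
evaluated as a predictor of the individual task `f`, has mean squared error
`Var(f) - Var(ψ) R²(ψ) + 2 (pcov(ψ, f - ψ | φ) - cov(ψ, f - ψ))`. -/
theorem bias_aggregated_target {Ω : Type*} [MeasurableSpace Ω] (μ : Measure Ω)
    [IsProbabilityMeasure μ] {d : ℕ} (hd : 0 < d)
    (φ : Fin d → Ω → ℝ) (hφ : ∀ k, MemLp (φ k) 2 μ)
    (hφ0 : ∀ k, ∫ ω, φ k ω ∂μ = 0)
    (S : Matrix (Fin d) (Fin d) ℝ)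
    (hS : ∀ k j, S k j = cov μ (φ k) (φ j))
    (hSinv : IsUnit S.det)
    (f : Ω → ℝ) (hf : MemLp f 2 μ) (hf0 : ∫ ω, f ω ∂μ = 0)
    (ψ : Ω → ℝ) (hψ : MemLp ψ 2 μ) (hψ0 : ∫ ω, ψ ω ∂μ = 0)
    (hψvar : 0 < variance ψ μ)
    (cψ : Fin d → ℝ) (hcψ : ∀ k, cψ k = cov μ (φ k) ψ)
    (wψ : Fin d → ℝ) (hwψ : wψ = S⁻¹ *ᵥ cψ)
    (R2ψ : ℝ) (hR2ψ : R2ψ = (cψ ⬝ᵥ (S⁻¹ *ᵥ cψ)) / variance ψ μ)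
    (cgap : Fin d → ℝ) (hcgap : ∀ k, cgap k = cov μ (φ k) (fun ω => f ω - ψ ω))
    (pcovgap : ℝ)
    (hpcovgap : pcovgap
      = cov μ ψ (fun ω => f ω - ψ ω) - cψ ⬝ᵥ (S⁻¹ *ᵥ cgap)) :
    ∫ ω, (∑ k, wψ k * φ k ω - f ω) ^ 2 ∂μ
      = variance f μ - variance ψ μ * R2ψ
        + 2 * (pcovgap - cov μ ψ (fun ω => f ω - ψ ω)) := by
  classical
  -- integrability of products
  have hkj : ∀ k j, Integrable (fun ω => φ k ω * φ j ω) μ :=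
    fun k j => memLp_two_integrable_mul (hφ k) (hφ j)
  have hkf : ∀ k, Integrable (fun ω => φ k ω * f ω) μ :=
    fun k => memLp_two_integrable_mul (hφ k) hf
  have hkψ : ∀ k, Integrable (fun ω => φ k ω * ψ ω) μ :=
    fun k => memLp_two_integrable_mul (hφ k) hψ
  -- the vector of covariances of φ with f
  set cf : Fin d → ℝ := fun k => ∫ ω, φ k ω * f ω ∂μ with hcf
  -- matrix entries as integrals
  have hSij : ∀ k j, S k j = ∫ ω, φ k ω * φ j ω ∂μ := fun k j => by
    rw [hS, cov_zero_mean (hφ0 k) (hφ0 j)]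
  -- covariance vector with ψ as integrals
  have hcψ' : ∀ k, cψ k = ∫ ω, φ k ω * ψ ω ∂μ := fun k => by
    rw [hcψ, cov_zero_mean (hφ0 k) hψ0]
  -- gap vector
  have hcgap' : ∀ k, cgap k = cf k - cψ k := by
    intro k
    have h0 : ∫ ω, (f ω - ψ ω) ∂μ = 0 := by
      rw [integral_sub (hf.integrable one_le_two) (hψ.integrable one_le_two), hf0, hψ0]
      ring
    have hsplit : (fun ω => φ k ω * (f ω - ψ ω))
        = fun ω => φ k ω * f ω - φ k ω * ψ ω := by funext ω; ring
    rw [hcgap, cov_zero_mean (hφ0 k) h0, hsplit, integral_sub (hkf k) (hkψ k),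
      hcψ' k, hcf]
  -- expand the square pointwise
  have expand : (fun ω => (∑ k, wψ k * φ k ω - f ω) ^ 2)
      = fun ω => (∑ k, ∑ j, (wψ k * wψ j) * (φ k ω * φ j ω))
          - 2 * (∑ k, wψ k * (φ k ω * f ω)) + f ω ^ 2 := by
    funext ω
    have h1 : (∑ k, wψ k * φ k ω) * (∑ j, wψ j * φ j ω)
        = ∑ k, ∑ j, (wψ k * wψ j) * (φ k ω * φ j ω) := by
      rw [Finset.sum_mul_sum]
      exact Finset.sum_congr rfl fun k _ => Finset.sum_congr rfl fun j _ => by ring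
    have h2 : (∑ k, wψ k * φ k ω) * f ω = ∑ k, wψ k * (φ k ω * f ω) := by
      rw [Finset.sum_mul]
      exact Finset.sum_congr rfl fun k _ => by ring
    linear_combination h1 - 2 * h2
  -- integrability of the pieces
  have Ia : Integrable (fun ω => ∑ k, ∑ j, (wψ k * wψ j) * (φ k ω * φ j ω)) μ :=
    integrable_finset_sum _ fun k _ =>
      integrable_finset_sum _ fun j _ => (hkj k j).const_mul _
  have Ib : Integrable (fun ω => 2 * (∑ k, wψ k * (φ k ω * f ω))) μ :=
    (integrable_finset_sum _ fun k _ => (hkf k).const_mul _).const_mul 2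
  have Ic : Integrable (fun ω => f ω ^ 2) μ := hf.integrable_sq
  -- compute each integral
  have hA : ∫ ω, (∑ k, ∑ j, (wψ k * wψ j) * (φ k ω * φ j ω)) ∂μ
      = ∑ k, ∑ j, (wψ k * wψ j) * S k j := by
    rw [integral_finset_sum _ (fun k _ =>
      integrable_finset_sum _ fun j _ => (hkj k j).const_mul _)]
    refine Finset.sum_congr rfl fun k _ => ?_
    rw [integral_finset_sum _ (fun j _ => (hkj k j).const_mul _)]
    refine Finset.sum_congr rfl fun j _ => ?_
    rw [integral_const_mul, hSij k j]
  have hB : ∫ ω, 2 * (∑ k, wψ k * (φ k ω * f ω)) ∂μ = 2 * ∑ k, wψ k * cf k := by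
    rw [integral_const_mul, integral_finset_sum _ (fun k _ => (hkf k).const_mul _)]
    congr 1
    exact Finset.sum_congr rfl fun k _ => by rw [integral_const_mul]
  have hC : ∫ ω, f ω ^ 2 ∂μ = variance f μ := by
    rw [variance_eq_sub hf, hf0]
    simp [Pi.pow_apply]
  -- the LHS
  have hLHS : ∫ ω, (∑ k, wψ k * φ k ω - f ω) ^ 2 ∂μ
      = (∑ k, ∑ j, (wψ k * wψ j) * S k j) - 2 * (∑ k, wψ k * cf k) + variance f μ := by
    have Iab : Integrable (fun ω => (∑ k, ∑ j, (wψ k * wψ j) * (φ k ω * φ j ω))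
        - 2 * (∑ k, wψ k * (φ k ω * f ω))) μ := Ia.sub Ib
    rw [expand, integral_add Iab Ic, integral_sub Ia Ib, hA, hB, hC]
  -- matrix algebra
  have hSw : S *ᵥ wψ = cψ := by
    rw [hwψ, Matrix.mulVec_mulVec, Matrix.mul_nonsing_inv S hSinv, Matrix.one_mulVec]
  have hquad : (∑ k, ∑ j, (wψ k * wψ j) * S k j) = cψ ⬝ᵥ (S⁻¹ *ᵥ cψ) := by
    have h1 : (∑ k, ∑ j, (wψ k * wψ j) * S k j) = wψ ⬝ᵥ (S *ᵥ wψ) := by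
      simp only [dotProduct, Matrix.mulVec, Finset.mul_sum]
      exact Finset.sum_congr rfl fun k _ => Finset.sum_congr rfl fun j _ => by ring
    rw [h1, hSw, hwψ, dotProduct_comm]
  -- symmetry of S and S⁻¹
  have hsymm : Sᵀ = S := by
    ext k j
    simp only [Matrix.transpose_apply, hS]
    simp [cov, mul_comm]
  have hsymm' : (S⁻¹)ᵀ = S⁻¹ := by
    rw [Matrix.transpose_nonsing_inv, hsymm]
  have hcross : cψ ⬝ᵥ (S⁻¹ *ᵥ cf) = ∑ k, wψ k * cf k := by
    have : cψ ⬝ᵥ (S⁻¹ *ᵥ cf) = ((S⁻¹)ᵀ *ᵥ cψ) ⬝ᵥ cf := by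
      rw [Matrix.dotProduct_mulVec, Matrix.mulVec_transpose]
    rw [this, hsymm', ← hwψ, dotProduct]
  -- gap dot product
  have hgapdot : cψ ⬝ᵥ (S⁻¹ *ᵥ cgap)
      = (∑ k, wψ k * cf k) - cψ ⬝ᵥ (S⁻¹ *ᵥ cψ) := by
    have hc : cgap = fun k => cf k - cψ k := funext hcgap'
    have hsub : S⁻¹ *ᵥ cgap = S⁻¹ *ᵥ cf - S⁻¹ *ᵥ cψ := by
      rw [hc]
      rw [show (fun k => cf k - cψ k) = cf - cψ from rfl, Matrix.mulVec_sub]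
    rw [hsub, dotProduct_sub, hcross]
  -- put everything together
  rw [hLHS, hquad, hR2ψ, hpcovgap, hgapdot,
    mul_div_cancel₀ _ (ne_of_gt hψvar)]
  ring
end

section
/- (Appendix: asymptotic bias difference between the aggregated-target model and the single-task model.) Let f : Ω → ℝ and ψ : Ω → ℝ be square-integrable mean-zero random variables with Var(f) > 0 and Var(ψ) > 0. Then E[ ( ∑_k w(ψ) k * φ k − f )² ] − E[ ( ∑_k w(f) k * φ k − f )² ] = Var(ψ) * R²(ψ) + Var(f) * R²(f) − 2 * ( cov(f, ψ) − pcov(f, ψ | φ) ). -/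
open MeasureTheory ProbabilityTheory Matrix

section Aux
variable {Ω : Type*} [MeasurableSpace Ω] {μ : Measure Ω} [IsProbabilityMeasure μ]

omit [IsProbabilityMeasure μ] in
/-- The product of two `ℒ²` functions is integrable. -/
lemma integrable_mul_of_memL2 {X Y : Ω → ℝ} (hX : MemLp X 2 μ) (hY : MemLp Y 2 μ) :
    Integrable (fun ω => X ω * Y ω) μ := by
  refine Integrable.mono' ((hX.integrable_sq.add hY.integrable_sq).div_const 2)
    (hX.aestronglyMeasurable.mul hY.aestronglyMeasurable) ?_
  filter_upwards with ω
  simp only [Pi.add_apply]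
  rw [Real.norm_eq_abs, abs_mul]
  nlinarith [sq_nonneg (|X ω| - |Y ω|), sq_abs (X ω), sq_abs (Y ω), abs_nonneg (X ω),
    abs_nonneg (Y ω)]

omit [IsProbabilityMeasure μ] in
lemma cov_eq_integral_mul {X Y : Ω → ℝ} (hX0 : ∫ ω, X ω ∂μ = 0) (hY0 : ∫ ω, Y ω ∂μ = 0) :
    cov μ X Y = ∫ ω, X ω * Y ω ∂μ := by
  simp [cov, hX0, hY0]

lemma var_eq_integral_sq {X : Ω → ℝ} (hX : MemLp X 2 μ) (hX0 : ∫ ω, X ω ∂μ = 0) :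
    variance X μ = ∫ ω, X ω ^ 2 ∂μ := by
  rw [variance_eq_sub hX]
  simp [hX0]

/-- Expansion of the mean squared error of a linear predictor. -/
lemma expand_bias {d : ℕ} (φ : Fin d → Ω → ℝ) (hφ : ∀ k, MemLp (φ k) 2 μ)
    (f : Ω → ℝ) (hf : MemLp f 2 μ) (w : Fin d → ℝ) :
    ∫ ω, (∑ k, w k * φ k ω - f ω) ^ 2 ∂μ
      = (∑ k, ∑ j, w k * w j * ∫ ω, φ k ω * φ j ω ∂μ)
        - 2 * (∑ k, w k * ∫ ω, φ k ω * f ω ∂μ) + ∫ ω, f ω ^ 2 ∂μ := by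
  have hpt : ∀ ω, (∑ k, w k * φ k ω - f ω) ^ 2
      = (∑ k, ∑ j, w k * w j * (φ k ω * φ j ω))
        - 2 * (∑ k, w k * (φ k ω * f ω)) + f ω ^ 2 := by
    intro ω
    rw [sub_sq, sq (∑ k, w k * φ k ω), Finset.sum_mul_sum, mul_assoc, Finset.sum_mul]
    congr 1
    congr 1
    · exact Finset.sum_congr rfl fun k _ => Finset.sum_congr rfl fun j _ => by ring
    · congr 1
      exact Finset.sum_congr rfl fun k _ => by ring
  simp_rw [hpt]
  have hI1 : Integrable (fun ω => ∑ k, ∑ j, w k * w j * (φ k ω * φ j ω)) μ :=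
    integrable_finset_sum _ fun k _ => integrable_finset_sum _ fun j _ =>
      (integrable_mul_of_memL2 (hφ k) (hφ j)).const_mul _
  have hI2 : Integrable (fun ω => 2 * (∑ k, w k * (φ k ω * f ω))) μ :=
    (integrable_finset_sum _ fun k _ =>
      (integrable_mul_of_memL2 (hφ k) hf).const_mul _).const_mul 2
  have hI12 : Integrable (fun ω => (∑ k, ∑ j, w k * w j * (φ k ω * φ j ω))
      - 2 * (∑ k, w k * (φ k ω * f ω))) μ := hI1.sub hI2
  rw [integral_add hI12 hf.integrable_sq, integral_sub hI1 hI2,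
    integral_finset_sum _ fun k _ => integrable_finset_sum _ fun j _ =>
      (integrable_mul_of_memL2 (hφ k) (hφ j)).const_mul _,
    integral_const_mul,
    integral_finset_sum _ fun k _ => (integrable_mul_of_memL2 (hφ k) hf).const_mul _]
  congr 1
  congr 1
  · exact Finset.sum_congr rfl fun k _ => by
      rw [integral_finset_sum _ fun j _ => (integrable_mul_of_memL2 (hφ k) (hφ j)).const_mul _]
      exact Finset.sum_congr rfl fun j _ => integral_const_mul _ _
  · congr 1
    exact Finset.sum_congr rfl fun k _ => integral_const_mul _ _

end Aux

/-- Appendix: asymptotic bias difference between the aggregated-target model and the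
single-task model:
`bias(ψ-model) - bias(f-model) = Var(ψ) R²(ψ) + Var(f) R²(f) - 2 (cov(f,ψ) - pcov(f,ψ|φ))`. -/
theorem bias_difference_aggregated_vs_single {Ω : Type*} [MeasurableSpace Ω]
    (μ : Measure Ω) [IsProbabilityMeasure μ] {d : ℕ} (hd : 0 < d)
    (φ : Fin d → Ω → ℝ) (hφ : ∀ k, MemLp (φ k) 2 μ)
    (hφ0 : ∀ k, ∫ ω, φ k ω ∂μ = 0)
    (S : Matrix (Fin d) (Fin d) ℝ)
    (hS : ∀ k j, S k j = cov μ (φ k) (φ j))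
    (hSinv : IsUnit S.det)
    (f : Ω → ℝ) (hf : MemLp f 2 μ) (hf0 : ∫ ω, f ω ∂μ = 0)
    (hfvar : 0 < variance f μ)
    (ψ : Ω → ℝ) (hψ : MemLp ψ 2 μ) (hψ0 : ∫ ω, ψ ω ∂μ = 0)
    (hψvar : 0 < variance ψ μ)
    (cf : Fin d → ℝ) (hcf : ∀ k, cf k = cov μ (φ k) f)
    (cψ : Fin d → ℝ) (hcψ : ∀ k, cψ k = cov μ (φ k) ψ)
    (wf : Fin d → ℝ) (hwf : wf = S⁻¹ *ᵥ cf)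
    (wψ : Fin d → ℝ) (hwψ : wψ = S⁻¹ *ᵥ cψ)
    (R2f : ℝ) (hR2f : R2f = (cf ⬝ᵥ (S⁻¹ *ᵥ cf)) / variance f μ)
    (R2ψ : ℝ) (hR2ψ : R2ψ = (cψ ⬝ᵥ (S⁻¹ *ᵥ cψ)) / variance ψ μ)
    (pcovfψ : ℝ) (hpcovfψ : pcovfψ = cov μ f ψ - cf ⬝ᵥ (S⁻¹ *ᵥ cψ)) :
    (∫ ω, (∑ k, wψ k * φ k ω - f ω) ^ 2 ∂μ)
      - ∫ ω, (∑ k, wf k * φ k ω - f ω) ^ 2 ∂μ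
      = variance ψ μ * R2ψ + variance f μ * R2f - 2 * (cov μ f ψ - pcovfψ) := by
  have hcovφ : ∀ k j, (∫ ω, φ k ω * φ j ω ∂μ) = S k j := fun k j => by
    rw [hS k j, cov_eq_integral_mul (hφ0 k) (hφ0 j)]
  have hintf : ∀ k, (∫ ω, φ k ω * f ω ∂μ) = cf k := fun k => by
    rw [hcf k, cov_eq_integral_mul (hφ0 k) hf0]
  have hSc : ∀ v : Fin d → ℝ, S *ᵥ (S⁻¹ *ᵥ v) = v := fun v => by
    rw [Matrix.mulVec_mulVec, Matrix.mul_nonsing_inv _ hSinv, Matrix.one_mulVec]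
  have key : ∀ w c : Fin d → ℝ, w = S⁻¹ *ᵥ c →
      (∑ k, ∑ j, w k * w j * S k j) = c ⬝ᵥ (S⁻¹ *ᵥ c) := by
    intro w c hw
    have h1 : (∑ k, ∑ j, w k * w j * S k j) = w ⬝ᵥ (S *ᵥ w) := by
      simp only [dotProduct, Matrix.mulVec, Finset.mul_sum]
      exact Finset.sum_congr rfl fun k _ => Finset.sum_congr rfl fun j _ => by ring
    rw [h1, hw, hSc, dotProduct_comm]
  have cross : ∀ c : Fin d → ℝ, (∑ k, (S⁻¹ *ᵥ c) k * cf k) = cf ⬝ᵥ (S⁻¹ *ᵥ c) := fun c =>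
    dotProduct_comm _ _
  rw [expand_bias φ hφ f hf wψ, expand_bias φ hφ f hf wf]
  simp_rw [hcovφ, hintf]
  rw [key wψ cψ hwψ, key wf cf hwf, hwψ, hwf, cross cψ, cross cf, hR2ψ, hR2f, hpcovfψ,
    mul_div_cancel₀ _ hψvar.ne', mul_div_cancel₀ _ hfvar.ne']
  ring
end
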